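/- For any matrices Z₁, Z₂ ∈ R^{n×k}, define dist(Z₁, Z₂) = min over orthogonal R ∈ O(k) of ‖Z₁ - Z₂ R‖_F. Then dist(Z₁, Z₂)² ≤ (1 / (2(√2 - 1) σ_k(Z₁)²)) · ‖Z₁ Z₁^T - Z₂ Z₂^T‖_F², where σ_k(Z₁) is the k-th (smallest) singular value of Z₁, assumed positive. -/

import Mathlib

open Matrix Filter

/-- Squared Frobenius norm of a real matrix. -/
noncomputable def frobSq {m n : ℕ} (M : Matrix (Fin m) (Fin n) ℝ) : ℝ :=
  ∑ i, ∑ j, (M i j) ^ 2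

lemma conjT_eq_transpose {a b : ℕ} (A : Matrix (Fin a) (Fin b) ℝ) : Aᴴ = Aᵀ := by
  ext i j; simp [conjTranspose_apply]

open scoped MatrixOrder in
/-- Square root of a PSD real matrix (via the continuous functional calculus). -/
noncomputable def Matrix.PosSemidef.sqrt {k : ℕ} {A : Matrix (Fin k) (Fin k) ℝ}
    (_hA : A.PosSemidef) : Matrix (Fin k) (Fin k) ℝ :=
  CFC.sqrt A

open scoped MatrixOrder in
lemma Matrix.PosSemidef.sqrt_mul_self {k : ℕ} {A : Matrix (Fin k) (Fin k) ℝ}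
    (hA : A.PosSemidef) : hA.sqrt * hA.sqrt = A :=
  CFC.sqrt_mul_sqrt_self A hA.nonneg

open scoped MatrixOrder in
lemma Matrix.PosSemidef.posSemidef_sqrt {k : ℕ} {A : Matrix (Fin k) (Fin k) ℝ}
    (hA : A.PosSemidef) : hA.sqrt.PosSemidef :=
  (CFC.sqrt_nonneg A).posSemidef

lemma polar_invertible {k : ℕ} (B : Matrix (Fin k) (Fin k) ℝ) (hB : IsUnit B.det) :
    ∃ R ∈ Matrix.orthogonalGroup (Fin k) ℝ, (B * R).PosSemidef := by
  have hBBt : (B * Bᵀ).PosSemidef := by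
    have := Matrix.posSemidef_conjTranspose_mul_self (Bᵀ)
    rwa [conjT_eq_transpose, transpose_transpose] at this
  set C := hBBt.sqrt with hC
  have hC2 : C * C = B * Bᵀ := hBBt.sqrt_mul_self
  have hCsym : Cᵀ = C := by
    have := hBBt.posSemidef_sqrt.isHermitian
    rwa [Matrix.IsHermitian, conjT_eq_transpose] at this
  have hCdet : IsUnit C.det := by
    have : C.det * C.det = B.det * B.det := by
      rw [← Matrix.det_mul, hC2, Matrix.det_mul, Matrix.det_transpose]
    exact isUnit_of_mul_isUnit_left (this ▸ hB.mul hB)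
  refine ⟨B⁻¹ * C, ?_, ?_⟩
  · rw [Matrix.mem_orthogonalGroup_iff]
    have : (B⁻¹ * C)ᵀ = Cᵀ * (Bᵀ)⁻¹ := by
      rw [Matrix.transpose_mul,
        Matrix.transpose_nonsing_inv]
    rw [this, hCsym]
    calc B⁻¹ * C * (C * (Bᵀ)⁻¹) = B⁻¹ * (C * C) * (Bᵀ)⁻¹ := by
          simp only [Matrix.mul_assoc]
      _ = B⁻¹ * B * (Bᵀ * (Bᵀ)⁻¹) := by rw [hC2]; simp only [Matrix.mul_assoc]
      _ = 1 := by
          rw [Matrix.nonsing_inv_mul _ hB, Matrix.mul_nonsing_inv _ (by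
            rwa [Matrix.det_transpose]), Matrix.one_mul]
  · have : B * (B⁻¹ * C) = C := by
      rw [← Matrix.mul_assoc, Matrix.mul_nonsing_inv _ hB, Matrix.one_mul]
    rw [this]
    exact hBBt.posSemidef_sqrt

lemma orthGroup_isCompact {k : ℕ} :
    IsCompact {R : Matrix (Fin k) (Fin k) ℝ | R ∈ Matrix.orthogonalGroup (Fin k) ℝ} := by
  have hsub : {R : Matrix (Fin k) (Fin k) ℝ | R ∈ Matrix.orthogonalGroup (Fin k) ℝ} ⊆
      Set.univ.pi (fun _ : Fin k => Set.univ.pi fun _ : Fin k => Set.Icc (-1 : ℝ) 1) := by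
    intro R hR
    rw [Set.mem_setOf_eq, Matrix.mem_orthogonalGroup_iff] at hR
    intro i _ j _
    have hdiag : (R * Rᵀ) i i = 1 := by rw [hR]; simp [Matrix.one_apply]
    have hsum : ∑ l, R i l * R i l = 1 := by
      simpa [Matrix.mul_apply, Matrix.star_eq_conjTranspose, conjT_eq_transpose,
        Matrix.transpose_apply] using hdiag
    have hle : R i j * R i j ≤ 1 := by
      rw [← hsum]
      exact Finset.single_le_sum (f := fun l => R i l * R i l)
        (fun l _ => mul_self_nonneg _) (Finset.mem_univ j)
    constructor <;> nlinarith [mul_self_nonneg (R i j)]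
  have hclosed : IsClosed {R : Matrix (Fin k) (Fin k) ℝ | R ∈ Matrix.orthogonalGroup (Fin k) ℝ} := by
    have hcont : Continuous fun R : Matrix (Fin k) (Fin k) ℝ => R * star R :=
      Continuous.matrix_mul continuous_id (continuous_id.matrix_conjTranspose)
    have : {R : Matrix (Fin k) (Fin k) ℝ | R ∈ Matrix.orthogonalGroup (Fin k) ℝ} =
        (fun R : Matrix (Fin k) (Fin k) ℝ => R * star R) ⁻¹' {1} := by
      ext R; simp [Matrix.mem_orthogonalGroup_iff, Matrix.star_eq_conjTranspose, conjT_eq_transpose]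
    rw [this]
    exact IsClosed.preimage hcont isClosed_singleton
  exact IsCompact.of_isClosed_subset
    (isCompact_univ_pi fun _ => isCompact_univ_pi fun _ => isCompact_Icc) hclosed hsub

instance matFCT {k : ℕ} : FirstCountableTopology (Matrix (Fin k) (Fin k) ℝ) :=
  inferInstanceAs (FirstCountableTopology (Fin k → Fin k → ℝ))

lemma polar_general {k : ℕ} (B : Matrix (Fin k) (Fin k) ℝ) :
    ∃ R ∈ Matrix.orthogonalGroup (Fin k) ℝ, (B * R).PosSemidef := by
  classical
  have hspec : (spectrum ℝ (-B)).Finite := Matrix.finite_spectrum _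
  have hex : ∀ m : ℕ, ∃ x : ℝ,
      x ∈ Set.Ioo (0 : ℝ) (1 / (m + 1)) \ spectrum ℝ (-B) := by
    intro m
    refine ((Set.Ioo_infinite ?_).diff hspec).nonempty
    positivity
  choose t ht using hex
  have ht0 : ∀ m, 0 < t m := fun m => ((ht m).1).1
  have ht1 : ∀ m, t m < 1 / (m + 1) := fun m => ((ht m).1).2
  have htspec : ∀ m, t m ∉ spectrum ℝ (-B) := fun m => (ht m).2
  -- the shifted matrices are invertible
  have hunit : ∀ m, IsUnit (t m • (1 : Matrix (Fin k) (Fin k) ℝ) + B).det := by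
    intro m
    rw [← Matrix.isUnit_iff_isUnit_det]
    have := (spectrum.notMem_iff.mp (htspec m))
    rwa [Algebra.algebraMap_eq_smul_one, sub_neg_eq_add] at this
  have hpolar := fun m => polar_invertible _ (hunit m)
  choose R hRmem hRpsd using hpolar
  obtain ⟨Rlim, hRlim, φ, hφ, hconv⟩ := orthGroup_isCompact.tendsto_subseq hRmem
  -- t (φ m) → 0
  have htt : Tendsto (fun m => t (φ m)) atTop (nhds 0) := by
    apply squeeze_zero (fun m => (ht0 (φ m)).le) (g := fun m : ℕ => 1 / ((m : ℝ) + 1))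
    · intro m
      refine le_trans (ht1 (φ m)).le ?_
      apply one_div_le_one_div_of_le (by positivity)
      have hm : (m : ℝ) ≤ (φ m : ℝ) := by exact_mod_cast hφ.le_apply
      linarith
    · exact tendsto_one_div_add_atTop_nhds_zero_nat
  have hGB : Tendsto (fun m => t (φ m) • (1 : Matrix (Fin k) (Fin k) ℝ) + B) atTop (nhds B) := by
    have h1 : Tendsto (fun m => t (φ m) • (1 : Matrix (Fin k) (Fin k) ℝ)) atTop (nhds 0) := by
      simpa using htt.smul_const (1 : Matrix (Fin k) (Fin k) ℝ)
    simpa using h1.add_const B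
  have hmul : Tendsto (fun m => (t (φ m) • (1 : Matrix (Fin k) (Fin k) ℝ) + B) * R (φ m))
      atTop (nhds (B * Rlim)) := by
    exact hGB.mul hconv
  refine ⟨Rlim, hRlim, Matrix.PosSemidef.of_dotProduct_mulVec_nonneg ?_ ?_⟩
  · -- IsHermitian
    have hherm : Tendsto (fun m => ((t (φ m) • (1 : Matrix (Fin k) (Fin k) ℝ) + B) * R (φ m))ᴴ)
        atTop (nhds ((B * Rlim)ᴴ)) :=
      ((continuous_id.matrix_conjTranspose).tendsto (B * Rlim)).comp hmul
    have heq : (fun m => ((t (φ m) • (1 : Matrix (Fin k) (Fin k) ℝ) + B) * R (φ m))ᴴ)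
        = fun m => (t (φ m) • (1 : Matrix (Fin k) (Fin k) ℝ) + B) * R (φ m) := by
      funext m; exact (hRpsd (φ m)).1
    rw [heq] at hherm
    exact tendsto_nhds_unique hherm hmul
  · intro x
    have hcont : Tendsto
        (fun m => star x ⬝ᵥ ((t (φ m) • (1 : Matrix (Fin k) (Fin k) ℝ) + B) * R (φ m)) *ᵥ x)
        atTop (nhds (star x ⬝ᵥ (B * Rlim) *ᵥ x)) := by
      have hq : Continuous fun A : Matrix (Fin k) (Fin k) ℝ => star x ⬝ᵥ A *ᵥ x :=
        (continuous_const.dotProduct (continuous_id.matrix_mulVec continuous_const))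
      exact (hq.tendsto (B * Rlim)).comp hmul
    exact ge_of_tendsto' hcont (fun m => (hRpsd (φ m)).dotProduct_mulVec_nonneg x)

lemma frobSq_eq_trace {m n : ℕ} (M : Matrix (Fin m) (Fin n) ℝ) :
    frobSq M = (Mᵀ * M).trace := by
  unfold frobSq
  rw [Matrix.trace]
  simp only [Matrix.diag_apply, Matrix.mul_apply, Matrix.transpose_apply]
  rw [Finset.sum_comm]
  simp [sq]

lemma trace_as_sum {k : ℕ} (A B : Matrix (Fin k) (Fin k) ℝ) :
    (A * B).trace = ∑ i, ∑ j, A i j * B j i := by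
  rw [Matrix.trace]
  simp [Matrix.diag_apply, Matrix.mul_apply]

lemma psd_trace_nonneg {k : ℕ} {A : Matrix (Fin k) (Fin k) ℝ} (hA : A.PosSemidef) :
    0 ≤ A.trace := by
  rw [Matrix.trace]
  apply Finset.sum_nonneg
  intro i _
  have := hA.dotProduct_mulVec_nonneg (Pi.single i 1)
  simpa [Matrix.mulVec_single, single_dotProduct] using this

lemma trace_mul_psd_nonneg {k : ℕ} {A B : Matrix (Fin k) (Fin k) ℝ}
    (hA : A.PosSemidef) (hB : B.PosSemidef) : 0 ≤ (A * B).trace := by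
  set C := hA.sqrt with hC
  have hC2 : C * C = A := hA.sqrt_mul_self
  have h1 : (A * B).trace = (C * B * Cᴴ).trace := by
    rw [← hC2, Matrix.mul_assoc, Matrix.trace_mul_comm, hA.posSemidef_sqrt.isHermitian.eq,
      Matrix.mul_assoc]
  rw [h1]
  exact psd_trace_nonneg (hB.mul_mul_conjTranspose_same C)

lemma trace_four {n k : ℕ} (A B C D : Matrix (Fin n) (Fin k) ℝ) :
    (A * Bᵀ * (C * Dᵀ)).trace = (Bᵀ * C * (Dᵀ * A)).trace := by
  rw [show A * Bᵀ * (C * Dᵀ) = A * (Bᵀ * C * Dᵀ) by simp only [Matrix.mul_assoc],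
    Matrix.trace_mul_comm, Matrix.mul_assoc]

lemma trace9 {n k : ℕ} (M Δ : Matrix (Fin n) (Fin k) ℝ) (hsym : Δᵀ * M = Mᵀ * Δ) :
    ((Δ * Δᵀ + Δ * Mᵀ + M * Δᵀ)ᵀ * (Δ * Δᵀ + Δ * Mᵀ + M * Δᵀ)).trace
      = ((Δᵀ * Δ) * (Δᵀ * Δ)).trace + 2 * ((Mᵀ * M) * (Δᵀ * Δ)).trace
        + 2 * ((Mᵀ * Δ) * (Mᵀ * Δ)).trace + 4 * ((Mᵀ * Δ) * (Δᵀ * Δ)).trace := by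
  simp only [Matrix.transpose_add, Matrix.transpose_mul, Matrix.transpose_transpose,
    Matrix.add_mul, Matrix.mul_add, Matrix.trace_add]
  rw [trace_four Δ Δ Δ Δ, trace_four Δ Δ Δ M, trace_four Δ Δ M Δ, trace_four Δ M Δ Δ,
    trace_four Δ M Δ M, trace_four Δ M M Δ, trace_four M Δ Δ Δ, trace_four M Δ Δ M,
    trace_four M Δ M Δ]
  rw [hsym]
  rw [Matrix.trace_mul_comm (Δᵀ * Δ) (Mᵀ * Δ), Matrix.trace_mul_comm (Δᵀ * Δ) (Mᵀ * M)]
  ring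

lemma key_arith (c σ p2 qp s2 sp trP : ℝ) (hc2 : c ^ 2 = 2) (hc0 : 0 ≤ c)
    (h1 : σ ^ 2 * trP ≤ qp) (h2 : 0 ≤ qp + sp) (hCS : sp ^ 2 ≤ s2 * p2)
    (hp2 : 0 ≤ p2) (hs2 : 0 ≤ s2) (htrP : 0 ≤ trP) :
    trP * (2 * (c - 1) * σ ^ 2) ≤ p2 + 2 * qp + 2 * s2 + 4 * sp := by
  have hc1 : 1 < c := by nlinarith
  have hclt : c < 2 := by nlinarith
  have key1 : 0 ≤ p2 + 2 * s2 + 2 * c * sp := by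
    rcases le_or_gt 0 sp with h | h
    · nlinarith
    · have hb : 0 ≤ p2 + 2 * s2 := by linarith
      have ha : 0 ≤ 2 * c * (-sp) := by nlinarith
      have hsq : (2 * c * (-sp)) ^ 2 ≤ (p2 + 2 * s2) ^ 2 := by
        have e : (2 * c * (-sp)) ^ 2 = 4 * c ^ 2 * sp ^ 2 := by ring
        rw [e, hc2]
        nlinarith [hCS, sq_nonneg (p2 - 2 * s2)]
      nlinarith [hsq, ha, hb]
  -- key2 : (4 - 2c)(qp+sp) + (2c-2) qp ≥ (2c-2) σ² trP
  have h4c : 0 ≤ 4 - 2 * c := by linarith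
  have h2c : 0 ≤ 2 * c - 2 := by linarith
  have key2 : (2 * c - 2) * (σ ^ 2 * trP) ≤ (4 - 2 * c) * (qp + sp) + (2 * c - 2) * qp := by
    have a1 : 0 ≤ (4 - 2 * c) * (qp + sp) := mul_nonneg h4c h2
    have a2 : (2 * c - 2) * (σ ^ 2 * trP) ≤ (2 * c - 2) * qp :=
      mul_le_mul_of_nonneg_left h1 h2c
    linarith
  nlinarith [key1, key2]

/-- Procrustes distance bound (Tu et al.): if `σ > 0` is (a lower bound for) the
smallest singular value of `Z₁`, i.e. `σ² ‖v‖² ≤ ‖Z₁ v‖²` for all `v`, then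
`min_{R ∈ O(k)} ‖Z₁ - Z₂ R‖_F² ≤ ‖Z₁Z₁ᵀ - Z₂Z₂ᵀ‖_F² / (2(√2 - 1) σ²)`. -/
theorem procrustes_dist_le_gram_diff {n k : ℕ}
    (Z₁ Z₂ : Matrix (Fin n) (Fin k) ℝ) (σ : ℝ) (hσ : 0 < σ)
    (hσk : ∀ v : Fin k → ℝ, σ ^ 2 * (∑ i, (v i) ^ 2) ≤ ∑ i, (Z₁.mulVec v i) ^ 2) :
    ∃ R ∈ Matrix.orthogonalGroup (Fin k) ℝ,
      frobSq (Z₁ - Z₂ * R) ≤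
        (1 / (2 * (Real.sqrt 2 - 1) * σ ^ 2)) * frobSq (Z₁ * Z₁ᵀ - Z₂ * Z₂ᵀ) := by
  classical
  obtain ⟨R, hR, hPSD⟩ := polar_general (Z₁ᵀ * Z₂)
  refine ⟨R, hR, ?_⟩
  set N := Z₂ * R with hN
  set Δ := N - Z₁ with hΔdef
  have hNZ : N = Z₁ + Δ := by rw [hΔdef]; abel
  have hRR : R * Rᵀ = 1 := by
    have := (Matrix.mem_orthogonalGroup_iff _ _).mp hR
    exact this
  -- S = Z₁ᵀ N is PSD
  have hS : (Z₁ᵀ * N).PosSemidef := by rw [hN, ← Matrix.mul_assoc]; exact hPSD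
  -- symmetry
  have hsym : Δᵀ * Z₁ = Z₁ᵀ * Δ := by
    have h1 : Nᵀ * Z₁ = Z₁ᵀ * N := by
      have := hS.1
      rw [Matrix.IsHermitian, conjT_eq_transpose, Matrix.transpose_mul,
        Matrix.transpose_transpose] at this
      exact this
    rw [hΔdef]
    rw [Matrix.transpose_sub, Matrix.sub_mul, Matrix.mul_sub, h1]
  -- gram difference
  have hZ2Z2 : Z₂ * Z₂ᵀ = N * Nᵀ := by
    rw [hN, Matrix.transpose_mul, show Z₂ * R * (Rᵀ * Z₂ᵀ) = Z₂ * (R * Rᵀ) * Z₂ᵀ by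
      simp only [Matrix.mul_assoc], hRR, Matrix.mul_one]
  -- scalars
  set p2 := ((Δᵀ * Δ) * (Δᵀ * Δ)).trace with hp2def
  set qp := ((Z₁ᵀ * Z₁) * (Δᵀ * Δ)).trace with hqpdef
  set s2 := ((Z₁ᵀ * Δ) * (Z₁ᵀ * Δ)).trace with hs2def
  set sp := ((Z₁ᵀ * Δ) * (Δᵀ * Δ)).trace with hspdef
  set trP := (Δᵀ * Δ).trace with htrPdef
  -- the Gram identity
  have hG : frobSq (Z₁ * Z₁ᵀ - Z₂ * Z₂ᵀ) = p2 + 2 * qp + 2 * s2 + 4 * sp := by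
    rw [frobSq_eq_trace, hZ2Z2]
    have hE : Z₁ * Z₁ᵀ - N * Nᵀ = -(Δ * Δᵀ + Δ * Z₁ᵀ + Z₁ * Δᵀ) := by
      rw [hNZ, Matrix.transpose_add, Matrix.add_mul, Matrix.mul_add, Matrix.mul_add]
      abel
    rw [hE, Matrix.transpose_neg, Matrix.neg_mul, Matrix.mul_neg, neg_neg]
    exact trace9 Z₁ Δ hsym
  -- P is PSD
  have hP : (Δᵀ * Δ).PosSemidef := by
    have := Matrix.posSemidef_conjTranspose_mul_self Δ
    rwa [conjT_eq_transpose] at this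
  -- Qg - σ² is PSD
  have hQ : ((Z₁ᵀ * Z₁) - σ ^ 2 • (1 : Matrix (Fin k) (Fin k) ℝ)).PosSemidef := by
    refine Matrix.PosSemidef.of_dotProduct_mulVec_nonneg ?_ ?_
    · rw [Matrix.IsHermitian, conjT_eq_transpose, Matrix.transpose_sub, Matrix.transpose_mul,
        Matrix.transpose_transpose, Matrix.transpose_smul, Matrix.transpose_one]
    · intro x
      have hx : star x = x := by funext i; simp
      have hquad : x ⬝ᵥ (Z₁ᵀ * Z₁) *ᵥ x = (Z₁ *ᵥ x) ⬝ᵥ (Z₁ *ᵥ x) := by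
        rw [← Matrix.mulVec_mulVec, Matrix.dotProduct_mulVec, Matrix.vecMul_transpose]
      have h1 := hσk x
      rw [hx, Matrix.sub_mulVec, dotProduct_sub, hquad, Matrix.smul_mulVec,
        Matrix.one_mulVec, dotProduct_smul]
      have e1 : (Z₁ *ᵥ x) ⬝ᵥ (Z₁ *ᵥ x) = ∑ i, (Z₁ *ᵥ x) i ^ 2 := by
        simp [dotProduct, sq]
      have e2 : x ⬝ᵥ x = ∑ i, x i ^ 2 := by simp [dotProduct, sq]
      rw [e1, e2]
      simp only [smul_eq_mul, sub_nonneg]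
      linarith [h1]
  -- inequality 1 : σ² trP ≤ qp
  have hineq1 : σ ^ 2 * trP ≤ qp := by
    have h0 := trace_mul_psd_nonneg hQ hP
    rw [Matrix.sub_mul, Matrix.trace_sub, Matrix.smul_mul, Matrix.one_mul,
      Matrix.trace_smul] at h0
    simp only [smul_eq_mul] at h0
    linarith
  -- inequality 2 : 0 ≤ qp + sp
  have hineq2 : 0 ≤ qp + sp := by
    have h0 := trace_mul_psd_nonneg hS hP
    have hdecomp : Z₁ᵀ * N = Z₁ᵀ * Z₁ + Z₁ᵀ * Δ := by rw [hNZ, Matrix.mul_add]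
    rw [hdecomp, Matrix.add_mul, Matrix.trace_add] at h0
    linarith
  -- symmetry facts for entrywise sums
  have hPsymm : (Δᵀ * Δ)ᵀ = Δᵀ * Δ := by
    rw [Matrix.transpose_mul, Matrix.transpose_transpose]
  have hS0symm : (Z₁ᵀ * Δ)ᵀ = Z₁ᵀ * Δ := by
    rw [Matrix.transpose_mul, Matrix.transpose_transpose, hsym]
  have ep : ∀ i j, (Δᵀ * Δ) j i = (Δᵀ * Δ) i j := by
    intro i j
    conv_lhs => rw [← hPsymm]
    rw [Matrix.transpose_apply]
  have es : ∀ i j, (Z₁ᵀ * Δ) j i = (Z₁ᵀ * Δ) i j := by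
    intro i j
    conv_lhs => rw [← hS0symm]
    rw [Matrix.transpose_apply]
  -- Cauchy-Schwarz : sp² ≤ s2 * p2
  have hCS : sp ^ 2 ≤ s2 * p2 := by
    have h1 : sp = ∑ ij : Fin k × Fin k, (Z₁ᵀ * Δ) ij.1 ij.2 * (Δᵀ * Δ) ij.1 ij.2 := by
      rw [hspdef, trace_as_sum, Fintype.sum_prod_type]
      exact Finset.sum_congr rfl fun i _ => Finset.sum_congr rfl fun j _ => by rw [ep i j]
    have h2 : s2 = ∑ ij : Fin k × Fin k, (Z₁ᵀ * Δ) ij.1 ij.2 ^ 2 := by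
      rw [hs2def, trace_as_sum, Fintype.sum_prod_type]
      exact Finset.sum_congr rfl fun i _ => Finset.sum_congr rfl fun j _ => by
        rw [es i j, sq]
    have h3 : p2 = ∑ ij : Fin k × Fin k, (Δᵀ * Δ) ij.1 ij.2 ^ 2 := by
      rw [hp2def, trace_as_sum, Fintype.sum_prod_type]
      exact Finset.sum_congr rfl fun i _ => Finset.sum_congr rfl fun j _ => by
        rw [ep i j, sq]
    rw [h1, h2, h3]
    exact Finset.sum_mul_sq_le_sq_mul_sq Finset.univ _ _
  have hp2nn : 0 ≤ p2 := by
    have : p2 = ∑ ij : Fin k × Fin k, (Δᵀ * Δ) ij.1 ij.2 ^ 2 := by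
      rw [hp2def, trace_as_sum, Fintype.sum_prod_type]
      exact Finset.sum_congr rfl fun i _ => Finset.sum_congr rfl fun j _ => by
        rw [ep i j, sq]
    rw [this]; positivity
  have hs2nn : 0 ≤ s2 := by
    have : s2 = ∑ ij : Fin k × Fin k, (Z₁ᵀ * Δ) ij.1 ij.2 ^ 2 := by
      rw [hs2def, trace_as_sum, Fintype.sum_prod_type]
      exact Finset.sum_congr rfl fun i _ => Finset.sum_congr rfl fun j _ => by
        rw [es i j, sq]
    rw [this]; positivity
  -- trP = frobSq (Z₁ - Z₂ R)
  have htrP : frobSq (Z₁ - Z₂ * R) = trP := by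
    rw [frobSq_eq_trace]
    have : Z₁ - Z₂ * R = -Δ := by rw [hΔdef]; abel
    rw [this, Matrix.transpose_neg, Matrix.neg_mul, Matrix.mul_neg, neg_neg]
  have htrPnn : 0 ≤ trP := psd_trace_nonneg hP
  -- final arithmetic
  have hc0 : (0:ℝ) ≤ Real.sqrt 2 := Real.sqrt_nonneg 2
  have hc2 : Real.sqrt 2 ^ 2 = 2 := Real.sq_sqrt (by norm_num)
  have hc1 : 1 < Real.sqrt 2 := by
    rw [show (1:ℝ) = Real.sqrt 1 by rw [Real.sqrt_one]]
    exact Real.sqrt_lt_sqrt (by norm_num) (by norm_num)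
  have hD : 0 < 2 * (Real.sqrt 2 - 1) * σ ^ 2 :=
    mul_pos (mul_pos two_pos (sub_pos.mpr hc1)) (pow_pos hσ 2)
  rw [htrP, hG, one_div, inv_mul_eq_div, le_div_iff₀ hD]
  exact key_arith _ σ p2 qp s2 sp trP hc2 hc0 hineq1 hineq2 hCS hp2nn hs2nn htrPnn
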